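/- If C ∈ B³(δ), i.e., E‖C(x) − x‖² ≤ (1 − 1/δ)‖x‖² for all x with δ > 0, then δ ≥ 1, and moreover C ∈ B²(1/(2δ), 2): for all x, (1/(2δ))‖x‖² ≤ ⟨E[C(x)], x⟩ and E‖C(x)‖² ≤ 2⟨E[C(x)], x⟩. -/

import Mathlib

open MeasureTheory

/-- If `C ∈ B³(δ)`, i.e. `E‖C(x) − x‖² ≤ (1 − 1/δ)‖x‖²` for all `x` with `δ > 0`,
then `δ ≥ 1`, and moreover `C ∈ B²(1/(2δ), 2)`: for all `x`,
`(1/(2δ))‖x‖² ≤ ⟨E[C(x)], x⟩` and `E‖C(x)‖² ≤ 2⟨E[C(x)], x⟩`. -/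
theorem stmt5 {d : ℕ} (hd : 0 < d) {Ω : Type*} [MeasurableSpace Ω]
    (μ : Measure Ω) [IsProbabilityMeasure μ]
    (C : EuclideanSpace ℝ (Fin d) → Ω → EuclideanSpace ℝ (Fin d))
    (δ : ℝ) (hδ : 0 < δ)
    (hintC : ∀ x, Integrable (C x) μ)
    (hintC2 : ∀ x, Integrable (fun ω => ‖C x ω‖ ^ 2) μ)
    (hB : ∀ x, ∫ ω, ‖C x ω - x‖ ^ 2 ∂μ ≤ (1 - 1 / δ) * ‖x‖ ^ 2) :
    δ ≥ 1 ∧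
    ∀ x, (1 / (2 * δ)) * ‖x‖ ^ 2 ≤ (inner ℝ (∫ ω, C x ω ∂μ) x : ℝ) ∧
      ∫ ω, ‖C x ω‖ ^ 2 ∂μ ≤ 2 * (inner ℝ (∫ ω, C x ω ∂μ) x : ℝ) := by
  have key : ∀ x : EuclideanSpace ℝ (Fin d),
      ∫ ω, ‖C x ω - x‖ ^ 2 ∂μ
        = ∫ ω, ‖C x ω‖ ^ 2 ∂μ - 2 * (inner ℝ (∫ ω, C x ω ∂μ) x : ℝ) + ‖x‖ ^ 2 := by
    intro x
    have hinner : Integrable (fun ω => (inner ℝ x (C x ω) : ℝ)) μ :=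
      (hintC x).const_inner x
    have hint2 : Integrable (fun ω => 2 * (inner ℝ x (C x ω) : ℝ)) μ :=
      hinner.const_mul 2
    have hint1 : Integrable (fun ω => ‖C x ω‖ ^ 2 - 2 * (inner ℝ x (C x ω) : ℝ)) μ :=
      (hintC2 x).sub hint2
    have h1 : (fun ω => ‖C x ω - x‖ ^ 2)
        = fun ω => ‖C x ω‖ ^ 2 - 2 * (inner ℝ x (C x ω) : ℝ) + ‖x‖ ^ 2 := by
      funext ω
      rw [@norm_sub_sq_real (EuclideanSpace ℝ (Fin d))]
      rw [real_inner_comm]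
    rw [h1, integral_add hint1 (integrable_const _),
      integral_sub (hintC2 x) hint2, integral_const_mul,
      integral_inner (hintC x) x, real_inner_comm, integral_const]
    simp
  have key2 : ∀ x : EuclideanSpace ℝ (Fin d),
      ∫ ω, ‖C x ω‖ ^ 2 ∂μ + (1/δ) * ‖x‖ ^ 2 ≤ 2 * (inner ℝ (∫ ω, C x ω ∂μ) x : ℝ) := by
    intro x
    have := hB x
    rw [key x] at this
    nlinarith [this]
  have hδ1 : δ ≥ 1 := by
    set x : EuclideanSpace ℝ (Fin d) := EuclideanSpace.single ⟨0, hd⟩ 1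
    have hx : ‖x‖ = 1 := by simp [x]
    have h0 : (0:ℝ) ≤ ∫ ω, ‖C x ω - x‖ ^ 2 ∂μ :=
      integral_nonneg fun ω => by positivity
    have h := h0.trans (hB x)
    rw [hx] at h
    have h1δ : 1/δ ≤ 1 := by nlinarith
    exact (div_le_one hδ).mp h1δ
  refine ⟨hδ1, fun x => ?_⟩
  have hint2nn : (0:ℝ) ≤ ∫ ω, ‖C x ω‖ ^ 2 ∂μ :=
    integral_nonneg fun ω => by positivity
  have hxd : (0:ℝ) ≤ 1/δ * ‖x‖ ^ 2 := by positivity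
  have h2 := key2 x
  constructor
  · have h3 : 1/(2*δ) * ‖x‖ ^ 2 = (1/2) * (1/δ * ‖x‖ ^ 2) := by ring
    linarith
  · linarith
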